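/- Let s, D, n be positive integers with s odd, s ≥ 3D, and Dn even, and let a_{i,k} (1 ≤ i ≤ s, 0 ≤ k ≤ n) be rational numbers such that R_n(t) = Σ_{i=1}^{s} Σ_{k=0}^{n} a_{i,k}/(t+k)^i for every real t ∉ {0, -1, …, -n}. Then for every i with 1 ≤ i ≤ s and every k with 0 ≤ k ≤ n, the rational number d_n^{s+1-i} · a_{i,k} is an integer, where d_n = lcm(1, 2, …, n). -/

import Mathlib

/-- The rational function `R_n(t)` of Fischler–Sprang–Zudilin (depending on `s` and `D`). -/
noncomputable def R (s D n : ℕ) (t : ℝ) : ℝ :=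
  (D : ℝ) ^ (3 * D * n) * (n.factorial : ℝ) ^ (s + 1 - 3 * D) *
    (∏ j ∈ Finset.range (3 * D * n + 1), (t - n + (j : ℝ) / D)) /
    (∏ j ∈ Finset.range (n + 1), (t + j)) ^ (s + 1)

/-- `d_m = lcm(1, 2, …, m)`. -/
def dd (m : ℕ) : ℕ := (Finset.Icc 1 m).lcm id

namespace FSZ

open Polynomial Finset

/-! ### Elementary divisibility facts -/

lemma nat_prod_eq_ascFactorial (m k : ℕ) :
    ∏ i ∈ range k, (m + i) = m.ascFactorial k := by
  induction k with
  | zero => simp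
  | succ k ih => rw [Finset.prod_range_succ, ih, Nat.ascFactorial_succ, mul_comm]

lemma int_factorial_dvd_prod_nonneg (k : ℕ) (M : ℤ) (hM : 0 ≤ M) :
    (k.factorial : ℤ) ∣ ∏ i ∈ range k, (M + i) := by
  obtain ⟨m, rfl⟩ := Int.eq_ofNat_of_zero_le hM
  have h : ∏ i ∈ range k, ((m : ℤ) + i) = ((∏ i ∈ range k, (m + i) : ℕ) : ℤ) := by
    push_cast; rfl
  rw [h, nat_prod_eq_ascFactorial]
  exact_mod_cast Int.natCast_dvd_natCast.2 (Nat.factorial_dvd_ascFactorial m k)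

lemma int_factorial_dvd_prod (k : ℕ) (M : ℤ) :
    (k.factorial : ℤ) ∣ ∏ i ∈ range k, (M + i) := by
  rcases le_or_gt 0 M with hM | hM
  · exact int_factorial_dvd_prod_nonneg k M hM
  rcases lt_or_ge (-M) (k : ℤ) with hMk | hMk
  · have hmem : (-M).toNat ∈ range k := by
      rw [mem_range]; omega
    have hzero : M + ((-M).toNat : ℤ) = 0 := by
      rw [Int.toNat_of_nonneg (by omega)]; ring
    rw [Finset.prod_eq_zero hmem hzero]
    exact dvd_zero _
  · set N : ℤ := 1 - k - M with hN
    have hrefl : ∏ i ∈ range k, (M + i) = ∏ j ∈ range k, (-(N + j)) := by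
      rw [← Finset.prod_range_reflect (fun i => M + (i : ℤ)) k]
      refine Finset.prod_congr rfl fun j hj => ?_
      rw [mem_range] at hj
      have hcast : ((k - 1 - j : ℕ) : ℤ) = (k : ℤ) - 1 - j := by omega
      rw [hcast, hN]; ring
    rw [hrefl]
    have hneg : ∏ j ∈ range k, (-(N + j)) = (-1) ^ k * ∏ j ∈ range k, (N + j) := by
      rw [Finset.prod_congr rfl fun j (_ : j ∈ range k) => (neg_eq_neg_one_mul (N + (j:ℤ))),
        Finset.prod_mul_distrib, Finset.prod_const, Finset.card_range]
    rw [hneg]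
    exact Dvd.dvd.mul_left (int_factorial_dvd_prod_nonneg k N (by omega)) _

/-- `∏_{j' ∈ {0,…,n} \ {j}} (j' - j) = (-1)^j * j! * (n-j)!` over `ℚ`. -/
lemma prod_range_erase_sub (n j : ℕ) (hj : j ≤ n) :
    ∏ j' ∈ (range (n + 1)).erase j, ((j' : ℚ) - j)
      = (-1) ^ j * j.factorial * (n - j).factorial := by
  have hsplit : (range (n + 1)).erase j = range j ∪ Ico (j + 1) (n + 1) := by
    ext x
    simp only [mem_erase, mem_range, mem_union, mem_Ico]
    omega
  have hdisj : Disjoint (range j) (Ico (j + 1) (n + 1)) := by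
    rw [Finset.disjoint_left]
    intro x hx hx'
    simp only [mem_range] at hx
    simp only [mem_Ico] at hx'
    omega
  rw [hsplit, Finset.prod_union hdisj]
  have hA : ∏ x ∈ range j, ((x : ℚ) - j) = (-1) ^ j * j.factorial := by
    rw [← Finset.prod_range_reflect (fun x => (x : ℚ) - j) j]
    have : ∀ x ∈ range j, ((j - 1 - x : ℕ) : ℚ) - j = -((x : ℚ) + 1) := by
      intro x hx
      rw [mem_range] at hx
      have hcast : ((j - 1 - x : ℕ) : ℚ) = (j : ℚ) - 1 - x := by
        have : ((j - 1 - x : ℕ) : ℤ) = (j : ℤ) - 1 - x := by omega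
        exact_mod_cast congrArg (fun z : ℤ => (z : ℚ)) this
      rw [hcast]; ring
    rw [Finset.prod_congr rfl this]
    have : ∏ x ∈ range j, (-((x : ℚ) + 1)) = (-1) ^ j * ∏ x ∈ range j, ((x : ℚ) + 1) := by
      rw [Finset.prod_congr rfl fun x (_ : x ∈ range j) => (neg_eq_neg_one_mul ((x:ℚ) + 1)),
        Finset.prod_mul_distrib, Finset.prod_const, Finset.card_range]
    rw [this]
    have hfact : ∏ x ∈ range j, ((x : ℚ) + 1) = (j.factorial : ℚ) := by
      exact_mod_cast congrArg (Nat.cast : ℕ → ℚ) (Finset.prod_range_add_one_eq_factorial j)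
    rw [hfact]
  have hB : ∏ x ∈ Ico (j + 1) (n + 1), ((x : ℚ) - j) = ((n - j).factorial : ℚ) := by
    rw [Finset.prod_Ico_eq_prod_range]
    have hcongr : ∀ x ∈ range (n + 1 - (j + 1)), ((j + 1 + x : ℕ) : ℚ) - j = (x : ℚ) + 1 := by
      intro x _
      push_cast; ring
    rw [Finset.prod_congr rfl hcongr]
    have : n + 1 - (j + 1) = n - j := by omega
    rw [this]
    exact_mod_cast congrArg (Nat.cast : ℕ → ℚ) (Finset.prod_range_add_one_eq_factorial (n - j))
  rw [hA, hB]

/-! ### Power series bricks -/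

/-- Inverse of `X + C a` as a power series. -/
noncomputable def g (a : ℚ) : PowerSeries ℚ := PowerSeries.mk fun m => (-1) ^ m / a ^ (m + 1)

lemma g_mul (a : ℚ) (ha : a ≠ 0) : ((X + C a : ℚ[X]) : PowerSeries ℚ) * g a = 1 := by
  ext m
  rw [Polynomial.coe_add, Polynomial.coe_X, Polynomial.coe_C, add_mul]
  cases m with
  | zero =>
    rw [map_add, PowerSeries.coeff_zero_X_mul, PowerSeries.coeff_C_mul]
    simp [g, PowerSeries.coeff_mk, pow_one, ha]
  | succ m =>
    rw [map_add, PowerSeries.coeff_succ_X_mul, PowerSeries.coeff_C_mul]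
    simp only [g, PowerSeries.coeff_mk, PowerSeries.coeff_one, Nat.succ_ne_zero, if_false]
    field_simp
    ring

/-- The index set `{0, …, n} \ {k}`. -/
def S (n k : ℕ) : Finset ℕ := (range (n + 1)).erase k

/-- `wq k j = j - k` in `ℚ`. -/
def wq (k j : ℕ) : ℚ := (j : ℚ) - (k : ℚ)

lemma wq_ne_zero {k j : ℕ} (h : j ≠ k) : wq k j ≠ 0 := by
  simp only [wq, sub_ne_zero]
  exact_mod_cast h

/-- The product of the inverses of `X + C (j - k)` over `j ∈ S`. -/
noncomputable def V (n k : ℕ) : PowerSeries ℚ := ∏ j ∈ S n k, g (wq k j)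

lemma coe_prod_series (s : Finset ℕ) (f : ℕ → ℚ[X]) :
    ((∏ j ∈ s, f j : ℚ[X]) : PowerSeries ℚ) = ∏ j ∈ s, ((f j : ℚ[X]) : PowerSeries ℚ) := by
  simp only [← Polynomial.coeToPowerSeries.ringHom_apply, map_prod]

lemma WV (n k : ℕ) :
    ((∏ j ∈ S n k, (X + C (wq k j)) : ℚ[X]) : PowerSeries ℚ) * V n k = 1 := by
  rw [coe_prod_series, V, ← Finset.prod_mul_distrib]
  rw [Finset.prod_eq_one]
  intro j hj
  exact g_mul _ (wq_ne_zero (Finset.ne_of_mem_erase hj))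

lemma WerV (n k : ℕ) (j₀ : ℕ) (hj₀ : j₀ ∈ S n k) :
    ((∏ j ∈ (S n k).erase j₀, (X + C (wq k j)) : ℚ[X]) : PowerSeries ℚ) * V n k = g (wq k j₀) := by
  have hg := g_mul (wq k j₀) (wq_ne_zero (Finset.ne_of_mem_erase hj₀))
  have h1 : ((∏ j ∈ (S n k).erase j₀, (X + C (wq k j)) : ℚ[X]) : PowerSeries ℚ)
      * ((X + C (wq k j₀) : ℚ[X]) : PowerSeries ℚ)
      = ((∏ j ∈ S n k, (X + C (wq k j)) : ℚ[X]) : PowerSeries ℚ) := by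
    rw [← Polynomial.coe_mul, Finset.prod_erase_mul _ _ hj₀]
  calc ((∏ j ∈ (S n k).erase j₀, (X + C (wq k j)) : ℚ[X]) : PowerSeries ℚ) * V n k
      = ((∏ j ∈ (S n k).erase j₀, (X + C (wq k j)) : ℚ[X]) : PowerSeries ℚ) * V n k
        * (((X + C (wq k j₀) : ℚ[X]) : PowerSeries ℚ) * g (wq k j₀)) := by rw [hg, mul_one]
    _ = (((∏ j ∈ (S n k).erase j₀, (X + C (wq k j)) : ℚ[X]) : PowerSeries ℚ)
          * ((X + C (wq k j₀) : ℚ[X]) : PowerSeries ℚ)) * V n k * g (wq k j₀) := by ring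
    _ = ((∏ j ∈ S n k, (X + C (wq k j)) : ℚ[X]) : PowerSeries ℚ) * V n k * g (wq k j₀) := by rw [h1]
    _ = g (wq k j₀) := by rw [WV, one_mul]

/-! ### The integrality property -/

/-- `IntCo d f` : for every `m`, `d^m * (coefficient m of f)` is an integer. -/
def IntCo (d : ℕ) (f : PowerSeries ℚ) : Prop :=
  ∀ m : ℕ, ∃ z : ℤ, (d : ℚ) ^ m * PowerSeries.coeff m f = (z : ℚ)

lemma IntCo.one (d : ℕ) : IntCo d 1 := by
  intro m
  rcases Nat.eq_zero_or_pos m with rfl | hm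
  · exact ⟨1, by simp⟩
  · refine ⟨0, ?_⟩
    rw [PowerSeries.coeff_one, if_neg (by omega)]
    simp

lemma IntCo.mul {d : ℕ} {f h : PowerSeries ℚ} (hf : IntCo d f) (hh : IntCo d h) :
    IntCo d (f * h) := by
  intro m
  choose zf hzf using hf
  choose zh hzh using hh
  refine ⟨∑ p ∈ Finset.HasAntidiagonal.antidiagonal m, zf p.1 * zh p.2, ?_⟩
  rw [PowerSeries.coeff_mul, Finset.mul_sum]
  push_cast
  refine Finset.sum_congr rfl fun p hp => ?_
  have hpm : p.1 + p.2 = m := Finset.HasAntidiagonal.mem_antidiagonal.1 hp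
  calc (d : ℚ) ^ m * (PowerSeries.coeff p.1 f * PowerSeries.coeff p.2 h)
      = ((d : ℚ) ^ p.1 * PowerSeries.coeff p.1 f)
        * ((d : ℚ) ^ p.2 * PowerSeries.coeff p.2 h) := by
        rw [← hpm, pow_add]; ring
    _ = (zf p.1 : ℚ) * (zh p.2 : ℚ) := by rw [hzf, hzh]

lemma IntCo.prod {d : ℕ} (s : Finset ℕ) (f : ℕ → PowerSeries ℚ)
    (hf : ∀ j ∈ s, IntCo d (f j)) : IntCo d (∏ j ∈ s, f j) := by
  classical
  induction s using Finset.induction_on with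
  | empty => simpa using IntCo.one d
  | insert a s' hnotmem ih =>
    rw [Finset.prod_insert hnotmem]
    exact (hf a (Finset.mem_insert_self a s')).mul
      (ih fun j hj => hf j (Finset.mem_insert_of_mem hj))

lemma IntCo.pow {d : ℕ} {f : PowerSeries ℚ} (hf : IntCo d f) (e : ℕ) : IntCo d (f ^ e) := by
  induction e with
  | zero => simpa using IntCo.one d
  | succ e ih => rw [pow_succ]; exact ih.mul hf

lemma IntCo.add {d : ℕ} {f h : PowerSeries ℚ} (hf : IntCo d f) (hh : IntCo d h) :
    IntCo d (f + h) := by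
  intro m
  obtain ⟨z1, hz1⟩ := hf m
  obtain ⟨z2, hz2⟩ := hh m
  exact ⟨z1 + z2, by rw [map_add, mul_add, hz1, hz2]; push_cast; ring⟩

lemma IntCo.sum {d : ℕ} (s : Finset ℕ) (f : ℕ → PowerSeries ℚ)
    (hf : ∀ j ∈ s, IntCo d (f j)) : IntCo d (∑ j ∈ s, f j) := by
  classical
  induction s using Finset.induction_on with
  | empty =>
    intro m
    exact ⟨0, by simp⟩
  | insert a s' hnotmem ih =>
    rw [Finset.sum_insert hnotmem]
    exact (hf a (Finset.mem_insert_self a s')).add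
      (ih fun j hj => hf j (Finset.mem_insert_of_mem hj))

lemma IntCo_coe_int (d : ℕ) (P : ℤ[X]) :
    IntCo d ((P.map (Int.castRingHom ℚ) : ℚ[X]) : PowerSeries ℚ) := by
  intro m
  refine ⟨d ^ m * P.coeff m, ?_⟩
  rw [Polynomial.coeff_coe, Polynomial.coeff_map]
  simp only [Int.coe_castRingHom]
  push_cast
  ring

lemma IntCo_C_g (d n k j : ℕ) (hj : j ∈ S n k) (hdvd : ((j : ℤ) - k) ∣ (d : ℤ))
    (c : ℚ) (z : ℤ) (hz : c = (z : ℚ) * wq k j) :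
    IntCo d (PowerSeries.C c * g (wq k j)) := by
  have hjk : j ≠ k := Finset.ne_of_mem_erase hj
  have ha : wq k j ≠ 0 := wq_ne_zero hjk
  obtain ⟨e, he⟩ := hdvd
  have heq : (d : ℚ) = wq k j * (e : ℚ) := by
    have := congrArg (fun z : ℤ => (z : ℚ)) he
    push_cast at this
    rw [wq]
    linarith [this]
  intro m
  refine ⟨z * (-e) ^ m, ?_⟩
  rw [PowerSeries.coeff_C_mul]
  simp only [g, PowerSeries.coeff_mk]
  rw [hz, heq]
  push_cast
  field_simp
  ring

lemma card_S (n k : ℕ) (hk : k ≤ n) : (S n k).card = n := by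
  rw [S, Finset.card_erase_of_mem (by rw [mem_range]; omega), Finset.card_range]
  omega

lemma mem_S {n k j : ℕ} (hj : j ∈ S n k) : j ≤ n ∧ j ≠ k := by
  rw [S, Finset.mem_erase, Finset.mem_range] at hj
  exact ⟨by omega, hj.1⟩

lemma dvd_dd {n j k : ℕ} (hj : j ≤ n) (hk : k ≤ n) (hjk : j ≠ k) :
    ((j : ℤ) - (k : ℤ)) ∣ (dd n : ℤ) := by
  have hmem : ((j : ℤ) - (k : ℤ)).natAbs ∈ Finset.Icc 1 n := by
    rw [Finset.mem_Icc]
    omega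
  have h1 : ((j : ℤ) - (k : ℤ)).natAbs ∣ dd n := Finset.dvd_lcm (f := id) hmem
  have h2 := Int.natCast_dvd_natCast.2 h1
  rwa [Int.natAbs_dvd] at h2

lemma IntCo_C (d : ℕ) (c : ℚ) (z : ℤ) (hz : c = (z : ℚ)) :
    IntCo d (PowerSeries.C c) := by
  intro m
  rcases Nat.eq_zero_or_pos m with rfl | hm
  · exact ⟨z, by simpa using hz⟩
  · refine ⟨0, ?_⟩
    rw [PowerSeries.coeff_C, if_neg (by omega)]
    simp

lemma master (n k : ℕ) (hk : k ≤ n) (P : ℤ[X]) (hdeg : P.natDegree ≤ n)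
    (hdvd : ∀ j, j ≤ n → j ≠ k →
      ((j.factorial * (n - j).factorial : ℕ) : ℤ) ∣ P.eval ((k : ℤ) - (j : ℤ))) :
    IntCo (dd n) (((P.map (Int.castRingHom ℚ) : ℚ[X]) : PowerSeries ℚ) * V n k) := by
  classical
  set Pq : ℚ[X] := P.map (Int.castRingHom ℚ) with hPqdef
  set W₁ : ℚ[X] := ∏ j ∈ S n k, (X + C (wq k j)) with hW₁def
  have hWmonic : W₁.Monic := monic_prod_of_monic _ _ fun j _ => monic_X_add_C _
  have hcardS : (S n k).card = n := card_S n k hk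
  have hWdeg : W₁.natDegree = n := by
    rw [hW₁def, Polynomial.natDegree_prod _ _ fun j _ => (monic_X_add_C (wq k j)).ne_zero]
    rw [Finset.sum_congr rfl fun j (_ : j ∈ S n k) => natDegree_X_add_C (wq k j),
      Finset.sum_const, smul_eq_mul, mul_one, hcardS]
  have hPqdeg : Pq.natDegree ≤ n := le_trans Polynomial.natDegree_map_le hdeg
  set b : ℚ := Pq.coeff n with hbdef
  set ρ : ℚ[X] := Pq - C b * W₁ with hρdef
  have hWcoeffn : W₁.coeff n = 1 := by
    have := hWmonic.coeff_natDegree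
    rwa [hWdeg] at this
  have hρdeg : ρ.degree < ((S n k).card : WithBot ℕ) := by
    rw [hcardS, Polynomial.degree_lt_iff_coeff_zero]
    intro m hm
    rcases eq_or_lt_of_le hm with rfl | hlt
    · rw [hρdef]
      simp only [Polynomial.coeff_sub, Polynomial.coeff_C_mul, hWcoeffn, mul_one, hbdef]
      ring
    · rw [hρdef]
      simp only [Polynomial.coeff_sub, Polynomial.coeff_C_mul]
      rw [Polynomial.coeff_eq_zero_of_natDegree_lt (lt_of_le_of_lt hPqdeg hlt),
        Polynomial.coeff_eq_zero_of_natDegree_lt (by rw [hWdeg]; exact hlt)]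
      ring
  set v : ℕ → ℚ := fun j => (k : ℚ) - j with hvdef
  have hinj : Set.InjOn v (S n k) := by
    intro j hj j' hj' h
    simp only [hvdef] at h
    have : (j : ℚ) = (j' : ℚ) := by linarith
    exact_mod_cast this
  have hinterp := Lagrange.eq_interpolate hinj hρdeg
  set cj : ℕ → ℚ := fun j => ρ.eval (v j) * ∏ j' ∈ (S n k).erase j, (v j - v j')⁻¹ with hcjdef
  have hbasis : ∀ j ∈ S n k, Lagrange.basis (S n k) v j
      = C (∏ j' ∈ (S n k).erase j, (v j - v j')⁻¹)
        * ∏ j' ∈ (S n k).erase j, (X + C (wq k j')) := by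
    intro j hj
    rw [Lagrange.basis]
    have h1 : ∀ j' ∈ (S n k).erase j, Lagrange.basisDivisor (v j) (v j')
        = C (v j - v j')⁻¹ * (X + C (wq k j')) := by
      intro j' _
      have hwv : (X + C (wq k j') : ℚ[X]) = X - C (v j') := by
        rw [show wq k j' = -(v j') from by simp only [wq, hvdef]; ring, Polynomial.C_neg,
          ← sub_eq_add_neg]
      rw [Lagrange.basisDivisor, hwv]
    rw [Finset.prod_congr rfl h1, Finset.prod_mul_distrib, ← map_prod]
  have hkey : Pq = C b * W₁
      + ∑ j ∈ S n k, C (cj j) * ∏ j' ∈ (S n k).erase j, (X + C (wq k j')) := by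
    have h2 : ρ = ∑ j ∈ S n k, C (cj j) * ∏ j' ∈ (S n k).erase j, (X + C (wq k j')) := by
      conv_lhs => rw [hinterp]
      rw [Lagrange.interpolate_apply]
      refine Finset.sum_congr rfl fun j hj => ?_
      rw [hbasis j hj, ← mul_assoc, ← Polynomial.C_mul, hcjdef]
    rw [← h2, hρdef]
    ring
  have hseries : ((Pq : ℚ[X]) : PowerSeries ℚ) * V n k
      = PowerSeries.C b + ∑ j ∈ S n k, PowerSeries.C (cj j) * g (wq k j) := by
    conv_lhs => rw [hkey]
    rw [show ((C b * W₁ + ∑ j ∈ S n k, C (cj j) * ∏ j' ∈ (S n k).erase j, (X + C (wq k j'))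
        : ℚ[X]) : PowerSeries ℚ)
      = ((C b * W₁ : ℚ[X]) : PowerSeries ℚ)
        + ∑ j ∈ S n k, ((C (cj j) * ∏ j' ∈ (S n k).erase j, (X + C (wq k j')) : ℚ[X])
          : PowerSeries ℚ) from by
        simp only [← Polynomial.coeToPowerSeries.ringHom_apply, map_add, map_sum]]
    rw [add_mul, Finset.sum_mul]
    congr 1
    · rw [Polynomial.coe_mul, Polynomial.coe_C, mul_assoc, hW₁def, WV n k, mul_one]
    · refine Finset.sum_congr rfl fun j hj => ?_
      rw [Polynomial.coe_mul, Polynomial.coe_C, mul_assoc, WerV n k j hj]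
  rw [hseries]
  refine IntCo.add (IntCo_C _ b (P.coeff n) ?_) (IntCo.sum _ _ fun j hj => ?_)
  · rw [hbdef, hPqdef, Polynomial.coeff_map, Int.coe_castRingHom]
  · obtain ⟨hjn, hjk⟩ := mem_S hj
    obtain ⟨ej, hej⟩ := hdvd j hjn hjk
    refine IntCo_C_g (dd n) n k j hj (dvd_dd hjn hk hjk) (cj j) (-(-1) ^ j * ej) ?_
    -- evaluate cj j
    have hWeval : W₁.eval (v j) = 0 := by
      rw [hW₁def, Polynomial.eval_prod]
      refine Finset.prod_eq_zero hj ?_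
      simp only [Polynomial.eval_add, Polynomial.eval_X, Polynomial.eval_C, hvdef, wq]
      ring
    have hρeval : ρ.eval (v j) = ((P.eval ((k : ℤ) - (j : ℤ)) : ℤ) : ℚ) := by
      rw [hρdef, Polynomial.eval_sub, Polynomial.eval_mul, hWeval, mul_zero, sub_zero]
      have hcast : v j = (((k : ℤ) - (j : ℤ) : ℤ) : ℚ) := by
        simp only [hvdef]; push_cast; ring
      rw [hPqdef, hcast, Polynomial.eval_intCast_map, Int.coe_castRingHom]
      rfl
    have hkj : (k : ℚ) - j ≠ 0 := by
      have := wq_ne_zero (k := k) (j := j) hjk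
      simp only [wq] at this
      intro h
      exact this (by linarith)
    have hF : ((j.factorial * (n - j).factorial : ℕ) : ℚ) ≠ 0 := by
      positivity
    have hprodval : ((k : ℚ) - j) * ∏ j' ∈ (S n k).erase j, ((j' : ℚ) - j)
        = (-1) ^ j * j.factorial * (n - j).factorial := by
      have hkmem : k ∈ (range (n + 1)).erase j := by
        rw [Finset.mem_erase, Finset.mem_range]
        exact ⟨fun h => hjk h.symm, by omega⟩
      have herase : ((range (n + 1)).erase j).erase k = (S n k).erase j := by
        rw [S]
        exact Finset.erase_right_comm
      rw [← herase,
        Finset.mul_prod_erase ((range (n + 1)).erase j) (fun x => (x : ℚ) - (j : ℚ)) hkmem,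
        prod_range_erase_sub n j hjn]
    have hinv : ∏ j' ∈ (S n k).erase j, (v j - v j')⁻¹
        = (∏ j' ∈ (S n k).erase j, ((j' : ℚ) - j))⁻¹ := by
      rw [← Finset.prod_inv_distrib]
      refine Finset.prod_congr rfl fun j' _ => ?_
      congr 1
      simp only [hvdef]; ring
    set A : ℚ := ∏ j' ∈ (S n k).erase j, ((j' : ℚ) - j) with hAdef
    have hAne : A ≠ 0 := by
      intro h
      rw [h, mul_zero] at hprodval
      have h0 : ((-1 : ℚ)) ^ j * j.factorial * (n - j).factorial ≠ 0 := by
        have h1 : ((-1 : ℚ)) ^ j ≠ 0 := pow_ne_zero _ (by norm_num)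
        have h2 : (j.factorial : ℚ) ≠ 0 := by positivity
        have h3 : ((n - j).factorial : ℚ) ≠ 0 := by positivity
        exact mul_ne_zero (mul_ne_zero h1 h2) h3
      exact h0 hprodval.symm
    have hejq : ((P.eval ((k : ℤ) - (j : ℤ)) : ℤ) : ℚ)
        = (j.factorial * (n - j).factorial : ℕ) * (ej : ℚ) := by
      rw [hej]; push_cast; ring
    have h2j : ((-1 : ℚ)) ^ j * (-1) ^ j = 1 := by
      rw [← pow_add, ← two_mul, pow_mul]
      norm_num
    rw [hcjdef]
    simp only
    rw [hρeval, hinv, hejq]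
    simp only [wq]
    push_cast
    push_cast at hprodval
    set u : ℚ := (-1) ^ j with hudef
    field_simp
    linear_combination (-u * (ej : ℚ)) * hprodval
      + (-(ej : ℚ) * (j.factorial : ℚ) * ((n - j).factorial : ℚ)) * h2j

lemma prod_range_mul' {M : Type*} [CommMonoid M] (f : ℕ → M) (a b : ℕ) :
    ∏ j ∈ range (a * b), f j = ∏ q ∈ range a, ∏ l ∈ range b, f (q * b + l) := by
  induction a with
  | zero => simp
  | succ a ih =>
    rw [Nat.succ_mul, Finset.prod_range_add, ih, Finset.prod_range_succ]

lemma IntCo_coe (d : ℕ) (p : ℚ[X]) (h : ∀ m, ∃ z : ℤ, p.coeff m = (z : ℚ)) :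
    IntCo d ((p : ℚ[X]) : PowerSeries ℚ) := by
  intro m
  obtain ⟨z, hz⟩ := h m
  exact ⟨d ^ m * z, by rw [Polynomial.coeff_coe, hz]; push_cast; ring⟩

theorem main (s D n : ℕ) (hs : Odd s) (hD : 0 < D) (hn : 0 < n) (hsD : 3 * D ≤ s)
    (hDn : Even (D * n)) (a : ℕ → ℕ → ℚ)
    (ha : ∀ t : ℝ, (∀ k : ℕ, k ≤ n → t ≠ -(k : ℝ)) →
      R s D n t = ∑ i ∈ Finset.Icc 1 s, ∑ k ∈ Finset.range (n + 1), (a i k : ℝ) / (t + k) ^ i)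
    (i : ℕ) (hi1 : 1 ≤ i) (his : i ≤ s) (k : ℕ) (hk : k ≤ n) :
    ∃ z : ℤ, (dd n : ℚ) ^ (s + 1 - i) * a i k = (z : ℚ) := by
  classical
  have hD0 : (D : ℚ) ≠ 0 := Nat.cast_ne_zero.2 (by omega)
  set Nq : ℚ[X] := C ((D : ℚ) ^ (3 * D * n) * (n.factorial : ℚ) ^ (s + 1 - 3 * D))
      * ∏ j ∈ range (3 * D * n + 1), (X - C (n : ℚ) + C ((j : ℚ) / D)) with hNqdef
  set Bq : ℚ[X] := ∑ i' ∈ Finset.Icc 1 s, ∑ k' ∈ range (n + 1),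
      C (a i' k') * (X + C (k' : ℚ)) ^ (s + 1 - i')
        * ∏ j ∈ (range (n + 1)).erase k', (X + C (j : ℚ)) ^ (s + 1) with hBqdef
  -- ### Step 1 : the polynomial identity over ℚ
  have key : Nq = Bq := by
    apply Polynomial.map_injective (algebraMap ℚ ℝ) (algebraMap ℚ ℝ).injective
    have hroot : ∀ t : ℝ, (∀ k' : ℕ, k' ≤ n → t ≠ -(k' : ℝ)) →
        (Nq.map (algebraMap ℚ ℝ)).eval t = (Bq.map (algebraMap ℚ ℝ)).eval t := by
      intro t ht
      have hden0 : ∀ j ∈ range (n + 1), t + (j : ℝ) ≠ 0 := by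
        intro j hj
        rw [mem_range] at hj
        have h1 := ht j (by omega)
        intro h2
        exact h1 (by linarith)
      have hprodne : (∏ j ∈ range (n + 1), (t + (j : ℝ))) ≠ 0 :=
        Finset.prod_ne_zero_iff.2 hden0
      have hdenne : (∏ j ∈ range (n + 1), (t + (j : ℝ))) ^ (s + 1) ≠ 0 :=
        pow_ne_zero _ hprodne
      have hR := ha t ht
      have hNeval : (Nq.map (algebraMap ℚ ℝ)).eval t
          = (D : ℝ) ^ (3 * D * n) * (n.factorial : ℝ) ^ (s + 1 - 3 * D) *
              ∏ j ∈ range (3 * D * n + 1), (t - n + (j : ℝ) / D) := by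
        rw [hNqdef]
        rw [Polynomial.map_mul, Polynomial.map_prod, Polynomial.eval_mul, Polynomial.eval_prod]
        rw [Polynomial.map_C, Polynomial.eval_C]
        congr 1
        · rw [eq_ratCast (algebraMap ℚ ℝ)]
          push_cast
          ring
        · refine Finset.prod_congr rfl fun j _ => ?_
          rw [Polynomial.map_add, Polynomial.map_sub, Polynomial.map_X, Polynomial.map_C,
            Polynomial.map_C, Polynomial.eval_add, Polynomial.eval_sub, Polynomial.eval_X,
            Polynomial.eval_C, Polynomial.eval_C, eq_ratCast, eq_ratCast]
          push_cast
          ring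
      have hBeval : (Bq.map (algebraMap ℚ ℝ)).eval t
          = ∑ i' ∈ Finset.Icc 1 s, ∑ k' ∈ range (n + 1),
              (a i' k' : ℝ) * (t + (k' : ℝ)) ^ (s + 1 - i')
                * ∏ j ∈ (range (n + 1)).erase k', (t + (j : ℝ)) ^ (s + 1) := by
        rw [hBqdef, Polynomial.map_sum, Polynomial.eval_finset_sum]
        refine Finset.sum_congr rfl fun i' _ => ?_
        rw [Polynomial.map_sum, Polynomial.eval_finset_sum]
        refine Finset.sum_congr rfl fun k' _ => ?_
        rw [Polynomial.map_mul, Polynomial.map_mul, Polynomial.map_pow, Polynomial.map_prod,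
          Polynomial.map_C, Polynomial.map_add, Polynomial.map_X, Polynomial.map_C]
        rw [Polynomial.eval_mul, Polynomial.eval_mul, Polynomial.eval_pow, Polynomial.eval_prod,
          Polynomial.eval_C, Polynomial.eval_add, Polynomial.eval_X, Polynomial.eval_C]
        rw [eq_ratCast, eq_ratCast]
        rw [Rat.cast_natCast]
        congr 1
        refine Finset.prod_congr rfl fun j _ => ?_
        rw [Polynomial.map_pow, Polynomial.map_add, Polynomial.map_X, Polynomial.map_C,
          Polynomial.eval_pow, Polynomial.eval_add, Polynomial.eval_X, Polynomial.eval_C,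
          eq_ratCast, Rat.cast_natCast]
      rw [hNeval, hBeval]
      have hnum : (D : ℝ) ^ (3 * D * n) * (n.factorial : ℝ) ^ (s + 1 - 3 * D) *
            ∏ j ∈ range (3 * D * n + 1), (t - n + (j : ℝ) / D)
          = R s D n t * (∏ j ∈ range (n + 1), (t + (j : ℝ))) ^ (s + 1) := by
        rw [R, div_mul_cancel₀ _ hdenne]
      rw [hnum, hR, Finset.sum_mul]
      refine Finset.sum_congr rfl fun i' hi' => ?_
      rw [Finset.sum_mul]
      refine Finset.sum_congr rfl fun k' hk' => ?_
      have hi'2 : 1 ≤ i' ∧ i' ≤ s := Finset.mem_Icc.1 hi'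
      have hsplitden : ∏ j ∈ range (n + 1), (t + (j : ℝ))
          = (t + (k' : ℝ)) * ∏ j ∈ (range (n + 1)).erase k', (t + (j : ℝ)) :=
        (Finset.mul_prod_erase _ _ hk').symm
      have htk' : t + (k' : ℝ) ≠ 0 := hden0 k' hk'
      rw [hsplitden, mul_pow]
      have hpowsplit : (t + (k' : ℝ)) ^ (s + 1)
          = (t + (k' : ℝ)) ^ i' * (t + (k' : ℝ)) ^ (s + 1 - i') := by
        rw [← pow_add]
        congr 1
        omega
      rw [hpowsplit, ← Finset.prod_pow]
      field_simp
    have hsub : Nq.map (algebraMap ℚ ℝ) - Bq.map (algebraMap ℚ ℝ) = 0 := by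
      apply Polynomial.eq_zero_of_infinite_isRoot
      have hbadfin : (((range (n + 1)).image (fun k' : ℕ => -(k' : ℝ)) : Finset ℝ) : Set ℝ).Finite :=
        Finset.finite_toSet _
      apply Set.Infinite.mono (s := (((range (n + 1)).image (fun k' : ℕ => -(k' : ℝ)) : Finset ℝ) : Set ℝ)ᶜ)
      · intro t htc
        simp only [Set.mem_compl_iff, Finset.coe_image, Set.mem_image, Finset.mem_coe,
          mem_range, not_exists, not_and] at htc
        have ht : ∀ k' : ℕ, k' ≤ n → t ≠ -(k' : ℝ) := by
          intro k' hk' h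
          exact htc k' (by omega) h.symm
        have := hroot t ht
        simp only [Set.mem_setOf_eq, Polynomial.IsRoot, Polynomial.eval_sub]
        rw [this]
        ring
      · exact Set.Finite.infinite_compl hbadfin
    have := sub_eq_zero.1 hsub
    exact this
  -- ### Step 2 : substitute X ↦ X - k and pass to power series
  set φ : ℚ[X] →+* ℚ[X] := Polynomial.eval₂RingHom (Polynomial.C : ℚ →+* ℚ[X]) (X - C (k : ℚ))
    with hφdef
  have hkey2 : φ Nq = φ Bq := congrArg φ key
  have hφB : φ Bq = ∑ i' ∈ Finset.Icc 1 s, ∑ k' ∈ range (n + 1),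
      C (a i' k') * (X + C ((k' : ℚ) - k)) ^ (s + 1 - i')
        * ∏ j ∈ (range (n + 1)).erase k', (X + C ((j : ℚ) - k)) ^ (s + 1) := by
    rw [hBqdef, map_sum]
    refine Finset.sum_congr rfl fun i' _ => ?_
    rw [map_sum]
    refine Finset.sum_congr rfl fun k' _ => ?_
    rw [map_mul, map_mul, map_pow, map_prod φ]
    simp only [hφdef, Polynomial.coe_eval₂RingHom, Polynomial.eval₂_C, Polynomial.eval₂_add,
      Polynomial.eval₂_X, Polynomial.eval₂_pow]
    have hb : ∀ c : ℚ, (X - C (k : ℚ) + C c : ℚ[X]) = X + C (c - k) := by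
      intro c
      rw [Polynomial.C_sub]
      ring
    rw [hb ((k' : ℚ)),
      Finset.prod_congr rfl fun j (_ : j ∈ (range (n + 1)).erase k') => by rw [hb ((j : ℚ))]]
  have hφN : φ Nq = C ((D : ℚ) ^ (3 * D * n) * (n.factorial : ℚ) ^ (s + 1 - 3 * D))
      * ∏ j ∈ range (3 * D * n + 1), (X + C ((j : ℚ) / D - k - n)) := by
    rw [hNqdef, map_mul, map_prod φ]
    simp only [hφdef, Polynomial.coe_eval₂RingHom, Polynomial.eval₂_C, Polynomial.eval₂_add,
      Polynomial.eval₂_sub, Polynomial.eval₂_X]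
    rw [Finset.prod_congr rfl fun j (_ : j ∈ range (3 * D * n + 1)) =>
      show (X - C (k : ℚ) - C (n : ℚ) + C ((j : ℚ) / D) : ℚ[X])
          = X + C ((j : ℚ) / D - k - n) from by
        rw [Polynomial.C_sub, Polynomial.C_sub]
        ring]
  -- the series `Q`
  set Qser : PowerSeries ℚ := ((φ Nq : ℚ[X]) : PowerSeries ℚ) * (V n k) ^ (s + 1) with hQdef
  have hWV := WV n k
  -- ### Step 3 : coefficient extraction
  have hQa : PowerSeries.coeff (s + 1 - i) Qser = a i k := by
    have hBsplit : ∃ gp : ℚ[X], φ Bq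
        = (∑ i' ∈ Finset.Icc 1 s, C (a i' k) * X ^ (s + 1 - i'))
            * (∏ j ∈ S n k, (X + C (wq k j))) ^ (s + 1)
          + X ^ (s + 1) * gp := by
      rw [hφB]
      have hsplit1 : ∀ i' ∈ Finset.Icc 1 s,
          ∑ k' ∈ range (n + 1), C (a i' k') * (X + C ((k' : ℚ) - k)) ^ (s + 1 - i')
              * ∏ j ∈ (range (n + 1)).erase k', (X + C ((j : ℚ) - k)) ^ (s + 1)
            = C (a i' k) * X ^ (s + 1 - i')
                * (∏ j ∈ S n k, (X + C (wq k j))) ^ (s + 1)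
              + ∑ k' ∈ S n k, C (a i' k') * (X + C ((k' : ℚ) - k)) ^ (s + 1 - i')
                * ∏ j ∈ (range (n + 1)).erase k', (X + C ((j : ℚ) - k)) ^ (s + 1) := by
        intro i' _
        rw [← Finset.add_sum_erase _ _ (show k ∈ range (n + 1) by rw [mem_range]; omega)]
        have h1 : (X + C ((k : ℚ) - k)) ^ (s + 1 - i') = X ^ (s + 1 - i') := by
          rw [sub_self, Polynomial.C_0, add_zero]
        have h2 : ∏ j ∈ (range (n + 1)).erase k, (X + C ((j : ℚ) - k)) ^ (s + 1)
            = (∏ j ∈ S n k, (X + C (wq k j))) ^ (s + 1) := by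
          rw [← Finset.prod_pow]
          rfl
        rw [h1, h2, mul_assoc]
        rfl
      rw [Finset.sum_congr rfl hsplit1, Finset.sum_add_distrib, ← Finset.sum_mul]
      have hdvd2 : (X : ℚ[X]) ^ (s + 1) ∣ ∑ i' ∈ Finset.Icc 1 s, ∑ k' ∈ S n k,
          C (a i' k') * (X + C ((k' : ℚ) - k)) ^ (s + 1 - i')
            * ∏ j ∈ (range (n + 1)).erase k', (X + C ((j : ℚ) - k)) ^ (s + 1) := by
        refine Finset.dvd_sum fun i' _ => Finset.dvd_sum fun k' hk' => ?_
        obtain ⟨hk'n, hk'k⟩ := mem_S hk'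
        have hkmem : k ∈ (range (n + 1)).erase k' := by
          rw [Finset.mem_erase, mem_range]
          exact ⟨fun h => hk'k h.symm, by omega⟩
        have hdvd3 : (X + C ((k : ℚ) - k)) ^ (s + 1) ∣
            ∏ j ∈ (range (n + 1)).erase k', (X + C ((j : ℚ) - k)) ^ (s + 1) :=
          Finset.dvd_prod_of_mem _ hkmem
        rw [sub_self, Polynomial.C_0, add_zero] at hdvd3
        exact Dvd.dvd.mul_left hdvd3 _
      obtain ⟨gp, hgp⟩ := hdvd2
      exact ⟨gp, by rw [hgp]⟩
    obtain ⟨gp, hgp⟩ := hBsplit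
    have hQser2 : Qser = ∑ i' ∈ Finset.Icc 1 s,
          PowerSeries.C (a i' k) * (PowerSeries.X : PowerSeries ℚ) ^ (s + 1 - i')
        + (PowerSeries.X : PowerSeries ℚ) ^ (s + 1)
            * (((gp : ℚ[X]) : PowerSeries ℚ) * (V n k) ^ (s + 1)) := by
      rw [hQdef, hkey2, hgp]
      rw [show (((∑ i' ∈ Finset.Icc 1 s, C (a i' k) * X ^ (s + 1 - i'))
            * (∏ j ∈ S n k, (X + C (wq k j))) ^ (s + 1)
          + X ^ (s + 1) * gp : ℚ[X]) : PowerSeries ℚ)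
        = ((∑ i' ∈ Finset.Icc 1 s, C (a i' k) * X ^ (s + 1 - i') : ℚ[X]) : PowerSeries ℚ)
            * (((∏ j ∈ S n k, (X + C (wq k j)) : ℚ[X]) : PowerSeries ℚ)) ^ (s + 1)
          + ((X : ℚ[X]) : PowerSeries ℚ) ^ (s + 1) * ((gp : ℚ[X]) : PowerSeries ℚ) from by
          simp only [← Polynomial.coeToPowerSeries.ringHom_apply, map_add, map_mul, map_pow]]
      have hsum : ((∑ i' ∈ Finset.Icc 1 s, C (a i' k) * X ^ (s + 1 - i') : ℚ[X]) : PowerSeries ℚ)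
          = ∑ i' ∈ Finset.Icc 1 s,
              PowerSeries.C (a i' k) * (PowerSeries.X : PowerSeries ℚ) ^ (s + 1 - i') := by
        rw [show ((∑ i' ∈ Finset.Icc 1 s, C (a i' k) * X ^ (s + 1 - i') : ℚ[X]) : PowerSeries ℚ)
            = ∑ i' ∈ Finset.Icc 1 s, ((C (a i' k) * X ^ (s + 1 - i') : ℚ[X]) : PowerSeries ℚ)
          from by simp only [← Polynomial.coeToPowerSeries.ringHom_apply, map_sum]]
        refine Finset.sum_congr rfl fun i' _ => ?_
        rw [Polynomial.coe_mul, Polynomial.coe_C, Polynomial.coe_pow, Polynomial.coe_X]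
      have hWV1 : ((∏ j ∈ S n k, (X + C (wq k j)) : ℚ[X]) : PowerSeries ℚ) ^ (s + 1)
          * (V n k) ^ (s + 1) = 1 := by
        rw [← mul_pow, hWV, one_pow]
      rw [add_mul, hsum, Polynomial.coe_X]
      linear_combination (∑ i' ∈ Finset.Icc 1 s,
        PowerSeries.C (a i' k) * (PowerSeries.X : PowerSeries ℚ) ^ (s + 1 - i')) * hWV1
    rw [hQser2, map_add, map_sum]
    have hX0 : PowerSeries.coeff (s + 1 - i)
        ((PowerSeries.X : PowerSeries ℚ) ^ (s + 1)
          * (((gp : ℚ[X]) : PowerSeries ℚ) * (V n k) ^ (s + 1))) = 0 := by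
      rw [mul_comm, PowerSeries.coeff_mul_X_pow', if_neg (by omega)]
    rw [hX0, add_zero]
    rw [Finset.sum_eq_single i]
    · rw [PowerSeries.coeff_C_mul, PowerSeries.coeff_X_pow, if_pos rfl, mul_one]
    · intro i' hi' hne
      rw [Finset.mem_Icc] at hi'
      rw [PowerSeries.coeff_C_mul, PowerSeries.coeff_X_pow, if_neg (by omega), mul_zero]
    · intro habs
      exact absurd (Finset.mem_Icc.2 ⟨hi1, his⟩) habs
  -- ### Step 4 : integrality of the coefficients of `Qser`
  set e := s + 1 - 3 * D with hedef
  set PZ : ℕ → ℤ[X] := fun q => ∏ l ∈ range n,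
      (Polynomial.C (D : ℤ) * Polynomial.X
        + Polynomial.C ((q * n + l + 1 : ℤ) - D * k - D * n)) with hPZdef
  have hmapPZ : ∀ q : ℕ, (PZ q).map (Int.castRingHom ℚ)
      = ∏ l ∈ range n, (C (D : ℚ) * X
          + C (((q * n + l + 1 : ℕ) : ℚ) - D * k - D * n)) := by
    intro q
    rw [hPZdef, Polynomial.map_prod]
    refine Finset.prod_congr rfl fun l _ => ?_
    rw [Polynomial.map_add, Polynomial.map_mul, Polynomial.map_C, Polynomial.map_X,
      Polynomial.map_C]
    simp only [Int.coe_castRingHom]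
    rw [show (((D : ℤ) : ℚ)) = (D : ℚ) from by push_cast <;> ring,
      show ((((q * n + l + 1 : ℤ) - (D : ℤ) * k - (D : ℤ) * n : ℤ)) : ℚ)
        = (((q * n + l + 1 : ℕ)) : ℚ) - (D : ℚ) * k - (D : ℚ) * n from by push_cast <;> ring]
  have hfact : φ Nq = (X + C (-(k : ℚ) - n))
      * (∏ q ∈ range (3 * D), (PZ q).map (Int.castRingHom ℚ))
      * C ((n.factorial : ℚ)) ^ e := by
    rw [hφN]
    rw [Finset.prod_range_succ' (fun j => (X + C ((j : ℚ) / D - (k : ℚ) - (n : ℚ)))) (3 * D * n)]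
    have h0 : (X + C (((0 : ℕ) : ℚ) / D - (k : ℚ) - (n : ℚ)) : ℚ[X])
        = X + C (-(k : ℚ) - n) := by
      norm_num
    rw [h0]
    have hcst : (C ((D : ℚ) ^ (3 * D * n) * (n.factorial : ℚ) ^ e) : ℚ[X])
        = C ((D : ℚ) ^ (3 * D * n)) * C ((n.factorial : ℚ)) ^ e := by
      rw [← Polynomial.C_pow, ← Polynomial.C_mul]
    rw [hcst]
    have hDprod : (C ((D : ℚ) ^ (3 * D * n)) : ℚ[X])
        * ∏ j ∈ range (3 * D * n), (X + C ((((j + 1 : ℕ)) : ℚ) / D - (k : ℚ) - (n : ℚ)))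
        = ∏ q ∈ range (3 * D), (PZ q).map (Int.castRingHom ℚ) := by
      rw [prod_range_mul' (fun j => (X + C ((((j + 1 : ℕ)) : ℚ) / D - (k : ℚ) - (n : ℚ))))
        (3 * D) n]
      rw [show ((D : ℚ) ^ (3 * D * n)) = ∏ q ∈ range (3 * D), (D : ℚ) ^ n from by
        rw [Finset.prod_const, Finset.card_range, ← pow_mul]
        congr 1
        ring]
      rw [show (C (∏ q ∈ range (3 * D), (D : ℚ) ^ n) : ℚ[X])
          = ∏ q ∈ range (3 * D), (C ((D : ℚ) ^ n) : ℚ[X]) from map_prod _ _ _]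
      rw [← Finset.prod_mul_distrib]
      refine Finset.prod_congr rfl fun q _ => ?_
      rw [hmapPZ q]
      rw [show (C ((D : ℚ) ^ n) : ℚ[X]) = ∏ l ∈ range n, (C (D : ℚ) : ℚ[X]) from by
        rw [Finset.prod_const, Finset.card_range, ← Polynomial.C_pow]]
      rw [← Finset.prod_mul_distrib]
      refine Finset.prod_congr rfl fun l _ => ?_
      rw [mul_add, ← Polynomial.C_mul]
      congr 2
      rw [mul_sub, mul_sub, mul_div_cancel₀ _ hD0]
    rw [← hDprod]
    ring
  have hQint : IntCo (dd n) Qser := by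
    rw [hQdef, hfact]
    rw [show s + 1 = 3 * D + e from by omega, pow_add]
    rw [Polynomial.coe_mul, Polynomial.coe_mul, Polynomial.coe_pow, Polynomial.coe_C]
    rw [coe_prod_series]
    rw [show (V n k) ^ (3 * D) = ∏ q ∈ range (3 * D), V n k from by
      rw [Finset.prod_const, Finset.card_range]]
    have hrearr : ((X + C (-(k : ℚ) - n) : ℚ[X]) : PowerSeries ℚ)
        * (∏ q ∈ range (3 * D), (((PZ q).map (Int.castRingHom ℚ) : ℚ[X]) : PowerSeries ℚ))
        * (PowerSeries.C ((n.factorial : ℚ))) ^ e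
        * ((∏ q ∈ range (3 * D), V n k) * (V n k) ^ e)
      = ((X + C (-(k : ℚ) - n) : ℚ[X]) : PowerSeries ℚ)
        * (∏ q ∈ range (3 * D),
            (((PZ q).map (Int.castRingHom ℚ) : ℚ[X]) : PowerSeries ℚ) * V n k)
        * ((PowerSeries.C ((n.factorial : ℚ))) * V n k) ^ e := by
      rw [Finset.prod_mul_distrib, mul_pow]
      ring
    rw [mul_assoc _ _ ((∏ q ∈ range (3 * D), V n k) * (V n k) ^ e), ← mul_assoc,
      hrearr]
    refine IntCo.mul (IntCo.mul ?_ (IntCo.prod _ _ fun q _ => ?_)) (IntCo.pow ?_ e)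
    · apply IntCo_coe
      intro m
      match m with
      | 0 =>
        refine ⟨-((k : ℤ) + n), ?_⟩
        simp only [Polynomial.coeff_add, Polynomial.coeff_X_zero, Polynomial.coeff_C_zero,
          zero_add]
        push_cast
        ring
      | 1 =>
        refine ⟨1, ?_⟩
        simp [Polynomial.coeff_add, Polynomial.coeff_X_one, Polynomial.coeff_C]
      | (m + 2) =>
        refine ⟨0, ?_⟩
        simp [Polynomial.coeff_add, Polynomial.coeff_X, Polynomial.coeff_C]
    · refine master n k hk (PZ q) ?_ ?_
      · rw [hPZdef]
        refine le_trans (Polynomial.natDegree_prod_le _ _) ?_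
        refine le_trans (Finset.sum_le_card_nsmul _ _ 1 fun l _ => ?_) ?_
        · refine le_trans (Polynomial.natDegree_add_le _ _) ?_
          rw [max_le_iff]
          constructor
          · exact le_trans (Polynomial.natDegree_C_mul_le _ _)
              (le_of_eq Polynomial.natDegree_X)
          · exact le_trans (le_of_eq (Polynomial.natDegree_C _)) (by omega)
        · rw [Finset.card_range, smul_eq_mul, mul_one]
      · intro j hj hjk
        have heval : (PZ q).eval ((k : ℤ) - j)
            = ∏ l ∈ range n, (((q * n : ℤ) + 1 - D * j - D * n) + l) := by
          rw [hPZdef, Polynomial.eval_prod]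
          refine Finset.prod_congr rfl fun l _ => ?_
          rw [Polynomial.eval_add, Polynomial.eval_mul, Polynomial.eval_C, Polynomial.eval_X,
            Polynomial.eval_C]
          push_cast
          ring
        rw [heval]
        exact dvd_trans
          (Int.natCast_dvd_natCast.2 (Nat.factorial_mul_factorial_dvd_factorial hj))
          (int_factorial_dvd_prod n _)
    · have hm := master n k hk (Polynomial.C ((n.factorial : ℤ))) (by simp)
        (fun j hj hjk => by
          rw [Polynomial.eval_C]
          exact Int.natCast_dvd_natCast.2 (Nat.factorial_mul_factorial_dvd_factorial hj))
      have hCeq : ((Polynomial.C ((n.factorial : ℤ)) : ℤ[X]).map (Int.castRingHom ℚ) : ℚ[X])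
          = C ((n.factorial : ℚ)) := by
        rw [Polynomial.map_C]
        norm_num
      rw [hCeq, Polynomial.coe_C] at hm
      exact hm
  obtain ⟨z, hz⟩ := hQint (s + 1 - i)
  rw [hQa] at hz
  exact ⟨z, hz⟩

end FSZ

theorem stmt3 (s D n : ℕ) (hs : Odd s) (hD : 0 < D) (hn : 0 < n) (hsD : 3 * D ≤ s)
    (hDn : Even (D * n)) (a : ℕ → ℕ → ℚ)
    (ha : ∀ t : ℝ, (∀ k : ℕ, k ≤ n → t ≠ -(k : ℝ)) →
      R s D n t = ∑ i ∈ Finset.Icc 1 s, ∑ k ∈ Finset.range (n + 1), (a i k : ℝ) / (t + k) ^ i)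
    (i : ℕ) (hi1 : 1 ≤ i) (his : i ≤ s) (k : ℕ) (hk : k ≤ n) :
    ∃ z : ℤ, (dd n : ℚ) ^ (s + 1 - i) * a i k = (z : ℚ) :=
  FSZ.main s D n hs hD hn hsD hDn a ha i hi1 his k hk
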